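/- For ψ ∈ {1, −1}, ∫_ℝ e^{−rT}·S_T(z)·1{ψ·(S_T(z) − K) > 0}·φ(z) dz = S₀·e^{−qT}·Φ(ψd₁). -/

import Mathlib

open MeasureTheory

/-- The standard normal density. -/
noncomputable def gaussPDF (z : ℝ) : ℝ := (Real.sqrt (2 * Real.pi))⁻¹ * Real.exp (-z ^ 2 / 2)

/-- The standard normal cumulative distribution function. -/
noncomputable def gaussCDF (x : ℝ) : ℝ := ∫ z in Set.Iic x, gaussPDF z

lemma gaussPDF_tilt (a z : ℝ) :
    Real.exp (a * z) * gaussPDF z = Real.exp (a ^ 2 / 2) * gaussPDF (z - a) := by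
  unfold gaussPDF
  rw [show Real.exp (a*z) * ((Real.sqrt (2*Real.pi))⁻¹ * Real.exp (-z^2/2))
      = (Real.sqrt (2*Real.pi))⁻¹ * (Real.exp (a*z) * Real.exp (-z^2/2)) by ring,
    show Real.exp (a^2/2) * ((Real.sqrt (2*Real.pi))⁻¹ * Real.exp (-(z-a)^2/2))
      = (Real.sqrt (2*Real.pi))⁻¹ * (Real.exp (a^2/2) * Real.exp (-(z-a)^2/2)) by ring,
    ← Real.exp_add, ← Real.exp_add]
  congr 1
  ring

lemma gaussPDF_even (z : ℝ) : gaussPDF (-z) = gaussPDF z := by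
  unfold gaussPDF; ring_nf

lemma gaussCDF_Ioi (x : ℝ) : (∫ z in Set.Ioi (-x), gaussPDF z) = gaussCDF x := by
  have := integral_comp_neg_Iic x gaussPDF
  simp_rw [gaussPDF_even] at this
  rw [← this]; rfl

lemma gaussCDF_Iio (x : ℝ) : (∫ z in Set.Iio x, gaussPDF z) = gaussCDF x := by
  unfold gaussCDF
  rw [← MeasureTheory.integral_Iic_eq_integral_Iio]


/-- The conditional price of an asset-or-nothing option (`ψ = 1` call, `ψ = -1` put). -/
theorem stmt_9 (S₀ K T σ : ℝ) (r q : ℝ) (hS : 0 < S₀) (hK : 0 < K) (hT : 0 < T)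
    (hσ : 0 < σ) (ψ : ℝ) (hψ : ψ = 1 ∨ ψ = -1) :
    (∫ z : ℝ, Real.exp (-r * T)
        * (S₀ * Real.exp ((r - q - σ ^ 2 / 2) * T + σ * Real.sqrt T * z))
        * (if 0 < ψ * (S₀ * Real.exp ((r - q - σ ^ 2 / 2) * T + σ * Real.sqrt T * z) - K)
            then (1 : ℝ) else 0)
        * gaussPDF z)
      = S₀ * Real.exp (-q * T)
          * gaussCDF (ψ * ((Real.log (S₀ / K) + (r - q + σ ^ 2 / 2) * T)
              / (σ * Real.sqrt T))) := by
  have ha : 0 < σ * Real.sqrt T := mul_pos hσ (Real.sqrt_pos.2 hT)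
  set a : ℝ := σ * Real.sqrt T with ha_def
  have ha2 : a ^ 2 = σ ^ 2 * T := by
    rw [ha_def, mul_pow, Real.sq_sqrt hT.le]
  set m : ℝ := (r - q - σ ^ 2 / 2) * T with hm_def
  set d : ℝ := (Real.log (S₀ / K) + (r - q + σ ^ 2 / 2) * T) / a with hd_def
  have had : a * d = Real.log (S₀ / K) + (r - q + σ ^ 2 / 2) * T := by
    rw [hd_def]; field_simp
  have hlog : Real.log (K / S₀) = -(Real.log (S₀ / K)) := by
    rw [Real.log_div hK.ne' hS.ne', Real.log_div hS.ne' hK.ne']; ring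
  have hkey : a * (a - d) = Real.log (K / S₀) - m := by
    have h0 : a * (a - d) = a ^ 2 - a * d := by ring
    rw [h0, ha2, had, hlog, hm_def]; ring
  have hE : Real.exp (-r*T) * Real.exp m * Real.exp (a^2/2) = Real.exp (-q*T) := by
    rw [← Real.exp_add, ← Real.exp_add]
    congr 1
    rw [hm_def, ha2]; ring
  have hthresh : ∀ z : ℝ, (K < S₀ * Real.exp (m + a * z)) ↔ -d < z - a := by
    intro z
    rw [show (-d < z - a) ↔ a - d < z from ⟨fun h => by linarith, fun h => by linarith⟩]
    rw [show (K < S₀ * Real.exp (m + a * z)) ↔ K / S₀ < Real.exp (m + a * z) from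
      (div_lt_iff₀' hS).symm]
    rw [← Real.log_lt_iff_lt_exp (div_pos hK hS)]
    rw [show (Real.log (K / S₀) < m + a * z) ↔ a * (a - d) < a * z from by
      rw [hkey]; exact ⟨fun h => by linarith, fun h => by linarith⟩]
    exact mul_lt_mul_iff_right₀ ha
  have hthresh' : ∀ z : ℝ, (S₀ * Real.exp (m + a * z) < K) ↔ z - a < -d := by
    intro z
    rw [show (z - a < -d) ↔ z < a - d from ⟨fun h => by linarith, fun h => by linarith⟩]
    rw [show (S₀ * Real.exp (m + a * z) < K) ↔ Real.exp (m + a * z) < K / S₀ from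
      (lt_div_iff₀' hS).symm]
    rw [← Real.lt_log_iff_exp_lt (div_pos hK hS)]
    rw [show (m + a * z < Real.log (K / S₀)) ↔ a * z < a * (a - d) from by
      rw [hkey]; exact ⟨fun h => by linarith, fun h => by linarith⟩]
    exact mul_lt_mul_iff_right₀ ha
  rcases hψ with h1 | h1 <;> subst h1
  · -- call
    have hpt : ∀ z : ℝ, Real.exp (-r * T) * (S₀ * Real.exp (m + a * z))
        * (if 0 < 1 * (S₀ * Real.exp (m + a * z) - K) then (1:ℝ) else 0) * gaussPDF z
        = (S₀ * Real.exp (-q * T)) * Set.indicator (Set.Ioi (-d)) gaussPDF (z - a) := by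
      intro z
      by_cases hz : z - a ∈ Set.Ioi (-d)
      · rw [Set.indicator_of_mem hz, if_pos (by rw [one_mul]; have := (hthresh z).2 hz; linarith),
          mul_one, Real.exp_add]
        linear_combination (Real.exp (-r*T) * S₀ * Real.exp m) * gaussPDF_tilt a z
          + (S₀ * gaussPDF (z - a)) * hE
      · rw [Set.indicator_of_notMem hz, if_neg (fun hc => hz ((hthresh z).1 (by linarith)))]
        ring
    rw [integral_congr_ae (Filter.Eventually.of_forall hpt), integral_const_mul,
      integral_sub_right_eq_self (Set.indicator (Set.Ioi (-d)) gaussPDF) a,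
      MeasureTheory.integral_indicator measurableSet_Ioi, gaussCDF_Ioi, one_mul]
  · -- put
    have hpt : ∀ z : ℝ, Real.exp (-r * T) * (S₀ * Real.exp (m + a * z))
        * (if 0 < -1 * (S₀ * Real.exp (m + a * z) - K) then (1:ℝ) else 0) * gaussPDF z
        = (S₀ * Real.exp (-q * T)) * Set.indicator (Set.Iio (-d)) gaussPDF (z - a) := by
      intro z
      by_cases hz : z - a ∈ Set.Iio (-d)
      · rw [Set.indicator_of_mem hz, if_pos (by have := (hthresh' z).2 hz; linarith),
          mul_one, Real.exp_add]
        linear_combination (Real.exp (-r*T) * S₀ * Real.exp m) * gaussPDF_tilt a z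
          + (S₀ * gaussPDF (z - a)) * hE
      · rw [Set.indicator_of_notMem hz, if_neg (fun hc => hz ((hthresh' z).1 (by linarith)))]
        ring
    rw [integral_congr_ae (Filter.Eventually.of_forall hpt), integral_const_mul,
      integral_sub_right_eq_self (Set.indicator (Set.Iio (-d)) gaussPDF) a,
      MeasureTheory.integral_indicator measurableSet_Iio, gaussCDF_Iio, neg_one_mul]
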